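/- Let Q_k = 3^{2k} − 3^k + 1. For every integer k ≥ 1, there exists a pointed labeled graph (V, v₀, E) over the alphabet {0,1,2} with exactly 4^k vertices and exactly 6·4^{k−1} labeled edges whose path set X_{(V,E)}(v₀) equals X(1, Q_k), and whose underlying directed graph (with an edge u → w whenever (u, a, w) ∈ E for some label a) is strongly connected, i.e. every vertex is reachable from every vertex by a directed path. -/

import Mathlib

set_option maxHeartbeats 1000000
set_option linter.unusedTactic false
set_option linter.unreachableTactic false

open MeasureTheory ENNReal

noncomputable section

/-- The 3-adic Cantor set: 3-adic integers whose 3-adic expansion uses only digits 0 and 1. -/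
def Sigma3 : Set ℤ_[3] :=
  {x | ∃ a : ℕ → ℕ, (∀ i, a i ≤ 1) ∧ x = ∑' i, (a i : ℤ_[3]) * 3 ^ i}

/-- `C1 M = C(1, M) = {x : x ∈ Σ and M·x ∈ Σ}`. -/
def C1 (M : ℕ) : Set ℤ_[3] :=
  {x | x ∈ Sigma3 ∧ (M : ℤ_[3]) * x ∈ Sigma3}

/-- `X1 M = X(1, M)`: the set of 3-adic digit sequences (valued in {0,1,2}) of
elements of C(1, M). -/
def X1 (M : ℕ) : Set (ℕ → Fin 3) :=
  {a | (∑' i, ((a i : ℕ) : ℤ_[3]) * 3 ^ i) ∈ C1 M}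

/-- The n-interleaving of a set of sequences. -/
def Interleave {A : Type*} (n : ℕ) (X : Set (ℕ → A)) : Set (ℕ → A) :=
  {x | ∀ j < n, (fun i => x (j + i * n)) ∈ X}


/-- The path set of a pointed labeled graph: sequences of edge labels of infinite
walks starting at `v0`. -/
def PathSetOf {A V : Type*} (E : Set (V × A × V)) (v0 : V) : Set (ℕ → A) :=
  {x | ∃ v : ℕ → V, v 0 = v0 ∧ ∀ i, (v i, x i, v (i + 1)) ∈ E}

/-! ### Analytic preliminaries -/

lemma summable_aux (c : ℕ → ℤ_[3]) : Summable (fun i => c i * 3 ^ i) := by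
  apply Summable.of_norm_bounded (g := fun i => (3 : ℝ)⁻¹ ^ i)
    (summable_geometric_of_lt_one (by positivity) (by norm_num))
  intro i
  have h1 : ‖c i * 3 ^ i‖ ≤ ‖c i‖ * ‖(3 : ℤ_[3]) ^ i‖ := norm_mul_le _ _
  have h2 : ‖(3 : ℤ_[3]) ^ i‖ ≤ ‖(3 : ℤ_[3])‖ ^ i := norm_pow_le _ _
  have h3 : ‖c i‖ ≤ 1 := PadicInt.norm_le_one _
  have h4 : ‖(3 : ℤ_[3])‖ = (3:ℝ)⁻¹ := by
    have := @PadicInt.norm_p 3 ⟨by norm_num⟩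
    simpa using this
  calc ‖c i * 3 ^ i‖ ≤ 1 * ‖(3 : ℤ_[3])‖ ^ i := by
        refine h1.trans (mul_le_mul h3 h2 (norm_nonneg _) (by norm_num))
    _ = (3:ℝ)⁻¹ ^ i := by rw [one_mul, h4]

lemma tsum_shift (c : ℕ → ℤ_[3]) (n : ℕ) :
    ∑' i, c i * 3 ^ i
      = (∑ i ∈ Finset.range n, c i * 3 ^ i) + 3 ^ n * ∑' i, c (n + i) * 3 ^ i := by
  have hs := summable_aux c
  rw [← Summable.sum_add_tsum_nat_add n hs]
  congr 1
  have : ∀ i : ℕ, c (i + n) * 3 ^ (i + n) = 3 ^ n * (c (n + i) * 3 ^ i) := by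
    intro i; rw [add_comm i n, pow_add]; ring
  rw [tsum_congr this]; exact (summable_aux fun i => c (n+i)).tsum_mul_left _

lemma head_congr (c d : ℕ → ℕ)
    (h : ∑' i, (c i : ℤ_[3]) * 3 ^ i = ∑' i, (d i : ℤ_[3]) * 3 ^ i) :
    (c 0 : ZMod 3) = (d 0 : ZMod 3) := by
  rw [tsum_shift (fun i => (c i : ℤ_[3])) 1, tsum_shift (fun i => (d i : ℤ_[3])) 1] at h
  simp only [Finset.sum_range_one, pow_zero, mul_one, pow_one] at h
  have h2 := congrArg (PadicInt.toZMod) h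
  simp only [map_add, map_mul, map_natCast, map_ofNat] at h2
  have h3 : ((3 : ZMod 3)) = 0 := by decide
  rw [h3] at h2
  simpa using h2

lemma padic_three_ne_zero : (3 : ℤ_[3]) ≠ 0 := by
  intro h
  have := congrArg norm h
  rw [norm_zero] at this
  have h4 : ‖(3 : ℤ_[3])‖ = (3:ℝ)⁻¹ := by
    have := @PadicInt.norm_p 3 ⟨by norm_num⟩
    simpa using this
  rw [h4] at this
  norm_num at this

lemma tails_eq (c d : ℕ → ℕ) (n : ℕ)
    (hagree : ∀ i < n, c i = d i)
    (h : ∑' i, (c i : ℤ_[3]) * 3 ^ i = ∑' i, (d i : ℤ_[3]) * 3 ^ i) :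
    ∑' i, (c (n + i) : ℤ_[3]) * 3 ^ i = ∑' i, (d (n + i) : ℤ_[3]) * 3 ^ i := by
  rw [tsum_shift (fun i => (c i : ℤ_[3])) n, tsum_shift (fun i => (d i : ℤ_[3])) n] at h
  have hsum : ∑ i ∈ Finset.range n, (c i : ℤ_[3]) * 3 ^ i
      = ∑ i ∈ Finset.range n, (d i : ℤ_[3]) * 3 ^ i := by
    refine Finset.sum_congr rfl fun i hi => ?_
    rw [hagree i (Finset.mem_range.mp hi)]
  rw [hsum] at h
  have h2 := add_left_cancel h
  exact mul_left_cancel₀ (pow_ne_zero n padic_three_ne_zero) h2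

lemma digits_forced (d e : ℕ → ℕ) (hd : ∀ i, d i ≤ 1)
    (hkey : ∀ i, e i % 3 ≤ 1 → e i ≤ 1)
    (h : ∑' i, (e i : ℤ_[3]) * 3 ^ i = ∑' i, (d i : ℤ_[3]) * 3 ^ i) :
    ∀ i, e i ≤ 1 ∧ e i = d i := by
  intro i
  induction i using Nat.strong_induction_on with
  | _ n ih =>
    have hagree : ∀ j, j < n → e j = d j := fun j hj => (ih j hj).2
    have htail := tails_eq e d n hagree h
    have hc := head_congr (fun i => e (n + i)) (fun i => d (n + i)) htail
    simp only [Nat.add_zero] at hc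
    have h1 : ((e n % 3 : ℕ) : ZMod 3) = ((d n : ℕ) : ZMod 3) := by
      rw [ZMod.natCast_mod]; exact hc
    have hdn := hd n
    have h2 : e n % 3 = d n := by
      have h3 := congrArg ZMod.val h1
      rwa [ZMod.val_natCast_of_lt (by omega), ZMod.val_natCast_of_lt (by omega)] at h3
    have h4 : e n ≤ 1 := hkey n (by rw [h2]; exact hd n)
    exact ⟨h4, by omega⟩

lemma digits_unique (c d : ℕ → ℕ) (hc : ∀ i, c i < 3) (hd : ∀ i, d i < 3)
    (h : ∑' i, (c i : ℤ_[3]) * 3 ^ i = ∑' i, (d i : ℤ_[3]) * 3 ^ i) :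
    ∀ i, c i = d i := by
  intro i
  induction i using Nat.strong_induction_on with
  | _ n ih =>
    have htail := tails_eq c d n ih h
    have hc2 := head_congr (fun i => c (n + i)) (fun i => d (n + i)) htail
    simp only [Nat.add_zero] at hc2
    have h3 := congrArg ZMod.val hc2
    rwa [ZMod.val_natCast_of_lt (hc n), ZMod.val_natCast_of_lt (hd n)] at h3

/-! ### The carry process for multiplication by `Q_{m+1}` -/

def pa (m : ℕ) (a : ℕ → ℕ) (i : ℕ) : ℕ := if i < m + 1 then 0 else a (i - (m+1))

def carry (m : ℕ) (a : ℕ → ℕ) : ℕ → ℕ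
  | i =>
    if i < m + 1 then 0
    else (a (i - (m+1)) + (3^(m+1) - 1) * pa m a (i - (m+1)) + carry m a (i - (m+1))) / 3^(m+1)
  termination_by i => i
  decreasing_by omega

def tt (m : ℕ) (a : ℕ → ℕ) (i : ℕ) : ℕ := a i + (3^(m+1) - 1) * pa m a i + carry m a i

def ee (m : ℕ) (a : ℕ → ℕ) (i : ℕ) : ℕ := tt m a i % 3^(m+1)

lemma carry_lt (m : ℕ) (a : ℕ → ℕ) (i : ℕ) (h : i < m + 1) : carry m a i = 0 := by
  rw [carry]; simp [h]

lemma pa_lt (m : ℕ) (a : ℕ → ℕ) (i : ℕ) (h : i < m + 1) : pa m a i = 0 := by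
  simp [pa, h]

lemma carry_succ (m : ℕ) (a : ℕ → ℕ) (i : ℕ) :
    carry m a (i + (m+1)) = tt m a i / 3^(m+1) := by
  rw [carry]
  have h : ¬ (i + (m+1) < m + 1) := by omega
  simp only [h, if_false, Nat.add_sub_cancel]
  rfl

lemma pa_succ (m : ℕ) (a : ℕ → ℕ) (i : ℕ) : pa m a (i + (m+1)) = a i := by
  simp [pa, Nat.add_sub_cancel]
  intro h; omega

lemma pa_le (m : ℕ) (a : ℕ → ℕ) (ha : ∀ i, a i ≤ 1) (i : ℕ) : pa m a i ≤ 1 := by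
  unfold pa; split <;> simp [ha]

lemma carry_le (m : ℕ) (a : ℕ → ℕ) (ha : ∀ i, a i ≤ 1) (i : ℕ) : carry m a i ≤ 1 := by
  induction i using Nat.strong_induction_on with
  | _ n ih =>
    rw [carry]
    split
    · omega
    · rename_i h
      have h1 : a (n - (m+1)) ≤ 1 := ha _
      have h2 : pa m a (n - (m+1)) ≤ 1 := pa_le m a ha _
      have h3 : carry m a (n - (m+1)) ≤ 1 := ih _ (by omega)
      have h4 : 0 < 3^(m+1) := Nat.pow_pos (by norm_num)
      have h5 : a (n-(m+1)) + (3^(m+1) - 1) * pa m a (n-(m+1)) + carry m a (n-(m+1))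
          ≤ 3^(m+1) + 1 := by
        have h6 : (3^(m+1) - 1) * pa m a (n-(m+1)) ≤ (3^(m+1) - 1) * 1 :=
          Nat.mul_le_mul_left _ h2
        omega
      calc _ ≤ (3^(m+1) + 1) / 3^(m+1) := Nat.div_le_div_right h5
        _ ≤ 1 := by
          rw [Nat.div_le_iff_le_mul_add_pred h4]
          omega

lemma tt_decomp (m : ℕ) (a : ℕ → ℕ) (i : ℕ) :
    tt m a i = ee m a i + 3^(m+1) * carry m a (i + (m+1)) := by
  rw [carry_succ, ee]
  exact (Nat.mod_add_div _ _).symm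

lemma ee_key (m : ℕ) (a : ℕ → ℕ) (ha : ∀ i, a i ≤ 1) (i : ℕ)
    (h : ee m a i % 3 ≤ 1) : ee m a i ≤ 1 := by
  have hK : 3 ≤ 3^(m+1) := by
    calc (3:ℕ) = 3^1 := (pow_one 3).symm
    _ ≤ 3^(m+1) := Nat.pow_le_pow_right (by norm_num) (by omega)
  have hai := ha i
  have hpa := pa_le m a ha i
  have hc := carry_le m a ha i
  rcases Nat.le_one_iff_eq_zero_or_eq_one.mp hpa with hp0 | hp1
  · have htt : tt m a i < 3^(m+1) := by
      unfold tt; rw [hp0, Nat.mul_zero]; omega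
    have hee : ee m a i = tt m a i := Nat.mod_eq_of_lt htt
    unfold tt at hee
    rw [hp0, Nat.mul_zero] at hee
    omega
  · have htt : tt m a i = (3^(m+1) - 1) + (a i + carry m a i) := by
      unfold tt; rw [hp1, Nat.mul_one]; omega
    rcases Nat.eq_zero_or_pos (a i + carry m a i) with hs0 | hs1
    · have hee : ee m a i = 3^(m+1) - 1 := by
        rw [ee, htt, hs0, Nat.add_zero]
        exact Nat.mod_eq_of_lt (by omega)
      exfalso
      have hdvd : (3:ℕ) ∣ 3^(m+1) := dvd_pow_self 3 (Nat.succ_ne_zero m)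
      obtain ⟨q, hq⟩ := hdvd
      rw [hee, hq] at h
      omega
    · have htt2 : tt m a i = 3^(m+1) + (a i + carry m a i - 1) := by omega
      have hee : ee m a i = a i + carry m a i - 1 := by
        rw [ee, htt2, Nat.add_mod_left]
        exact Nat.mod_eq_of_lt (by omega)
      omega

lemma key_identity (m : ℕ) (a : ℕ → ℕ) :
    ∑' i, (ee m a i : ℤ_[3]) * 3 ^ i
      = ((3^(2*(m+1)) - 3^(m+1) + 1 : ℕ) : ℤ_[3]) * ∑' i, (a i : ℤ_[3]) * 3 ^ i := by
  set K : ℕ := m + 1 with hK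
  set B : ℤ_[3] := ((3^K - 1 : ℕ) : ℤ_[3]) with hB
  have sA := summable_aux (fun i => (a i : ℤ_[3]))
  have sPA := summable_aux (fun i => (pa m a i : ℤ_[3]))
  have sC := summable_aux (fun i => (carry m a i : ℤ_[3]))
  have sE := summable_aux (fun i => (ee m a i : ℤ_[3]))
  have sBPA : Summable (fun i => B * ((pa m a i : ℤ_[3]) * 3 ^ i)) := sPA.mul_left B
  have h1 : ∑' i, (tt m a i : ℤ_[3]) * 3 ^ i
      = (∑' i, (a i : ℤ_[3]) * 3 ^ i) + B * (∑' i, (pa m a i : ℤ_[3]) * 3 ^ i)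
        + ∑' i, (carry m a i : ℤ_[3]) * 3 ^ i := by
    have hpt : ∀ i : ℕ, (tt m a i : ℤ_[3]) * 3 ^ i
        = ((a i : ℤ_[3]) * 3 ^ i + B * ((pa m a i : ℤ_[3]) * 3 ^ i))
          + (carry m a i : ℤ_[3]) * 3 ^ i := by
      intro i
      unfold tt
      push_cast
      ring
    rw [tsum_congr hpt, Summable.tsum_add (Summable.add sA sBPA) sC, Summable.tsum_add sA sBPA, sPA.tsum_mul_left]
  have h2 : ∑' i, (pa m a i : ℤ_[3]) * 3 ^ i = 3^K * ∑' i, (a i : ℤ_[3]) * 3 ^ i := by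
    rw [tsum_shift (fun i => (pa m a i : ℤ_[3])) K]
    have hz : ∑ i ∈ Finset.range K, (pa m a i : ℤ_[3]) * 3 ^ i = 0 := by
      apply Finset.sum_eq_zero
      intro i hi
      rw [pa_lt m a i (Finset.mem_range.mp hi)]
      simp
    rw [hz, zero_add]
    congr 1
    exact tsum_congr fun i => by rw [add_comm K i, pa_succ]
  have h3 : ∑' i, (tt m a i : ℤ_[3]) * 3 ^ i
      = (∑' i, (ee m a i : ℤ_[3]) * 3 ^ i) + ∑' i, (carry m a i : ℤ_[3]) * 3 ^ i := by
    have hpt : ∀ i : ℕ, (tt m a i : ℤ_[3]) * 3 ^ i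
        = (ee m a i : ℤ_[3]) * 3 ^ i + (3:ℤ_[3])^K * ((carry m a (i + K) : ℤ_[3]) * 3 ^ i) := by
      intro i
      rw [tt_decomp m a i]
      push_cast
      ring
    have sCK : Summable (fun i => (3:ℤ_[3])^K * ((carry m a (i + K) : ℤ_[3]) * 3 ^ i)) :=
      (summable_aux (fun i => (carry m a (i + K) : ℤ_[3]))).mul_left _
    rw [tsum_congr hpt, Summable.tsum_add sE sCK,
      (summable_aux (fun i => (carry m a (i + K) : ℤ_[3]))).tsum_mul_left]
    congr 1
    rw [tsum_shift (fun i => (carry m a i : ℤ_[3])) K]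
    have hz : ∑ i ∈ Finset.range K, (carry m a i : ℤ_[3]) * 3 ^ i = 0 := by
      apply Finset.sum_eq_zero
      intro i hi
      rw [carry_lt m a i (Finset.mem_range.mp hi)]
      simp
    rw [hz, zero_add]
    congr 1
    exact tsum_congr fun i => by rw [add_comm K i]
  have h4 : ∑' i, (ee m a i : ℤ_[3]) * 3 ^ i
      = (1 + B * 3^K) * ∑' i, (a i : ℤ_[3]) * 3 ^ i := by
    have h0 := h1.symm.trans h3
    rw [h2] at h0
    have h5 := add_right_cancel h0
    rw [← h5]
    ring
  rw [h4]
  congr 1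
  have hle1 : (1:ℕ) ≤ 3^K := Nat.one_le_pow _ _ (by norm_num)
  have hle2 : (3:ℕ)^K ≤ 3^(2*K) := Nat.pow_le_pow_right (by norm_num) (by omega)
  rw [hB]
  push_cast [Nat.cast_sub hle1, Nat.cast_sub hle2]
  rw [two_mul, pow_add]
  ring

/-- Characterization of membership in `X1 (Q_{m+1})`. -/
lemma mem_X1_iff (m : ℕ) (a : ℕ → Fin 3) :
    a ∈ X1 (3 ^ (2 * (m+1)) - 3 ^ (m+1) + 1)
      ↔ (∀ i, (a i : ℕ) ≤ 1) ∧ (∀ i, ee m (fun i => (a i : ℕ)) i ≤ 1) := by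
  set av : ℕ → ℕ := fun i => (a i : ℕ) with hav
  constructor
  · rintro ⟨⟨b, hb, hxb⟩, ⟨d, hd, hyd⟩⟩
    have hab : ∀ i, av i = b i :=
      digits_unique av b (fun i => (a i).isLt) (fun i => by have := hb i; omega) hxb
    have ha1 : ∀ i, av i ≤ 1 := fun i => by rw [hab i]; exact hb i
    refine ⟨ha1, ?_⟩
    have hkey : ∑' i, (ee m av i : ℤ_[3]) * 3 ^ i = ∑' i, (d i : ℤ_[3]) * 3 ^ i :=
      (key_identity m av).trans hyd
    exact fun i => (digits_forced d (ee m av) hd (ee_key m av ha1) hkey i).1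
  · rintro ⟨ha1, hee⟩
    refine ⟨⟨av, ha1, rfl⟩, ⟨ee m av, hee, (key_identity m av).symm⟩⟩

/-! ### The base automaton -/

abbrev St : Type := Fin 2 × Fin 2

def BEdges : Finset (St × Fin 3 × St) :=
  {((0,0),0,(0,0)), ((0,0),1,(1,0)), ((1,0),1,(1,1)),
   ((1,1),1,(1,1)), ((1,1),0,(0,1)), ((0,1),0,(0,0))}

example : BEdges.card = 6 := by decide

lemma step_arith (m : ℕ) (s : St) (l : Fin 3) (s' : St) :
    (s, l, s') ∈ BEdges
      ↔ ((s'.1 : ℕ) = (l : ℕ)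
          ∧ ((l : ℕ) + (3^(m+1) - 1) * (s.1 : ℕ) + (s.2 : ℕ)) % 3^(m+1) ≤ 1
          ∧ (s'.2 : ℕ) = ((l : ℕ) + (3^(m+1) - 1) * (s.1 : ℕ) + (s.2 : ℕ)) / 3^(m+1)) := by
  have hK : 3 ≤ 3^(m+1) := by
    calc (3:ℕ) = 3^1 := (pow_one 3).symm
    _ ≤ 3^(m+1) := Nat.pow_le_pow_right (by norm_num) (by omega)
  have hP : 0 < 3^(m+1) := by omega
  have e0 : ∀ t : ℕ, t < 3^(m+1) → t % 3^(m+1) = t ∧ t / 3^(m+1) = 0 :=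
    fun t ht => ⟨Nat.mod_eq_of_lt ht, Nat.div_eq_of_lt ht⟩
  have e1 : ∀ r : ℕ, r < 3^(m+1) → (3^(m+1) + r) % 3^(m+1) = r ∧ (3^(m+1) + r) / 3^(m+1) = 1 := by
    intro r hr
    constructor
    · rw [Nat.add_mod_left]; exact Nat.mod_eq_of_lt hr
    · rw [Nat.add_div_left _ hP]
      rw [Nat.div_eq_of_lt hr]
  obtain ⟨p, c⟩ := s
  obtain ⟨p', c'⟩ := s'
  fin_cases p <;> fin_cases c <;> fin_cases l <;> fin_cases p' <;> fin_cases c' <;>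
    simp only [BEdges, Finset.mem_insert, Finset.mem_singleton, Prod.mk.injEq] <;>
    norm_num
  all_goals
    first
      | decide
      | ((try simp only [show (1:ℕ) + (3^(m+1)-1) = 3^(m+1) + 0 from by omega,
            show (1:ℕ) + (3^(m+1)-1) + 1 = 3^(m+1) + 1 from by omega,
            show (3:ℕ)^(m+1) - 1 + 1 = 3^(m+1) + 0 from by omega,
            show (2:ℕ) + (3^(m+1)-1) = 3^(m+1) + 1 from by omega,
            show (2:ℕ) + (3^(m+1)-1) + 1 = 3^(m+1) + 2 from by omega,
            (e0 1 (by omega)).1, (e0 1 (by omega)).2,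
            (e0 2 (by omega)).1, (e0 2 (by omega)).2,
            (e1 0 (by omega)).1, (e1 0 (by omega)).2,
            (e1 1 (by omega)).1, (e1 1 (by omega)).2,
            (e1 2 (by omega)).1, (e1 2 (by omega)).2])
         first
           | omega
           | exact ⟨by omega, trivial⟩
           | trivial)


lemma accept_iff (m : ℕ) (a : ℕ → Fin 3) :
    (∃ σ : ℕ → St, (∀ i, i < m+1 → σ i = (0,0)) ∧
        ∀ i, (σ i, a i, σ (i + (m+1))) ∈ BEdges)
      ↔ ((∀ i, (a i : ℕ) ≤ 1) ∧ ∀ i, ee m (fun j => ((a j : ℕ))) i ≤ 1) := by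
  set av : ℕ → ℕ := fun j => ((a j : ℕ)) with hav
  constructor
  · rintro ⟨σ, hσ0, hσs⟩
    have ha1 : ∀ i, av i ≤ 1 := by
      intro i
      have h1 := ((step_arith m _ _ _).mp (hσs i)).1
      have h2 := (σ (i + (m+1))).1.isLt
      simp only [hav]
      omega
    have claim : ∀ i, ((σ i).1 : ℕ) = pa m av i ∧ ((σ i).2 : ℕ) = carry m av i := by
      intro i
      induction i using Nat.strong_induction_on with
      | _ n ih =>
        by_cases hn : n < m + 1
        · rw [hσ0 n hn, pa_lt m av n hn, carry_lt m av n hn]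
          exact ⟨rfl, rfl⟩
        · set j := n - (m+1) with hj
          have hjn : j + (m+1) = n := by omega
          have hstep := (step_arith m _ _ _).mp (hσs j)
          rw [hjn] at hstep
          obtain ⟨ih1, ih2⟩ := ih j (by omega)
          constructor
          · rw [hstep.1, ← hjn, pa_succ]
          · rw [hstep.2.2, ih1, ih2, ← hjn, carry_succ]
            rfl
    refine ⟨ha1, fun i => ?_⟩
    have hstep := (step_arith m _ _ _).mp (hσs i)
    have h2 := hstep.2.1
    rw [(claim i).1, (claim i).2] at h2
    exact h2
  · rintro ⟨ha1, hee⟩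
    have hpa : ∀ i, pa m av i < 2 := fun i => by have := pa_le m av ha1 i; omega
    have hca : ∀ i, carry m av i < 2 := fun i => by have := carry_le m av ha1 i; omega
    refine ⟨fun i => (⟨pa m av i, hpa i⟩, ⟨carry m av i, hca i⟩), ?_, ?_⟩
    · intro i hi
      have h1 := pa_lt m av i hi
      have h2 := carry_lt m av i hi
      simp only [Prod.mk.injEq, Fin.ext_iff, h1, h2]
      exact ⟨rfl, rfl⟩
    · intro i
      refine (step_arith m _ _ _).mpr ⟨?_, ?_, ?_⟩
      · exact pa_succ m av i
      · exact hee i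
      · exact carry_succ m av i

/-! ### The graph -/

def EdgesV (m : ℕ) : Set ((Fin (m+1) → St) × Fin 3 × (Fin (m+1) → St)) :=
  {q | (∀ j : Fin m, q.2.2 (Fin.castSucc j) = q.1 (Fin.succ j)) ∧
       (q.1 0, q.2.1, q.2.2 (Fin.last m)) ∈ BEdges}

lemma pathset_iff (m : ℕ) (x : ℕ → Fin 3) :
    x ∈ PathSetOf (EdgesV m) (fun _ => ((0,0) : St))
      ↔ ∃ σ : ℕ → St, (∀ i, i < m+1 → σ i = (0,0)) ∧
          ∀ i, (σ i, x i, σ (i + (m+1))) ∈ BEdges := by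
  constructor
  · rintro ⟨v, hv0, hve⟩
    have hshift : ∀ (j : Fin (m+1)) (i : ℕ), v i j = v (i + j.val) 0 := by
      intro j
      induction j using Fin.induction with
      | zero => intro i; rfl
      | succ j ih =>
        intro i
        have h1 : v (i+1) (Fin.castSucc j) = v i (Fin.succ j) := (hve i).1 j
        rw [← h1, ih (i+1)]
        simp only [Fin.coe_castSucc, Fin.val_succ]
        congr 1
        omega
    refine ⟨fun i => v i 0, ?_, ?_⟩
    · intro i hi
      have h4 := hshift ⟨i, hi⟩ 0
      simp only [Nat.zero_add] at h4
      show v i 0 = (0,0)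
      rw [← h4, hv0]
    · intro i
      have h2 := (hve i).2
      simp only at h2
      have h3 : v (i+1) (Fin.last m) = v (i + (m+1)) 0 := by
        rw [hshift (Fin.last m) (i+1), Fin.val_last]
        congr 1
        omega
      show (v i 0, x i, v (i + (m+1)) 0) ∈ BEdges
      rwa [h3] at h2
  · rintro ⟨σ, hσ0, hσs⟩
    refine ⟨fun i => fun j => σ (i + j.val), ?_, ?_⟩
    · funext j
      show σ (0 + j.val) = (0,0)
      rw [Nat.zero_add]
      exact hσ0 j.val (by simpa using j.isLt)
    · intro i
      constructor
      · intro j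
        show σ ((i+1) + (Fin.castSucc j).val) = σ (i + (Fin.succ j).val)
        simp only [Fin.coe_castSucc, Fin.val_succ]
        congr 1
        omega
      · show (σ (i + (0 : Fin (m+1)).val), x i, σ ((i+1) + (Fin.last m).val)) ∈ BEdges
        have h1 : i + ((0 : Fin (m+1)).val) = i := by simp
        have h2 : (i+1) + (Fin.last m).val = i + (m+1) := by
          rw [Fin.val_last]; omega
        rw [h1, h2]
        exact hσs i

/-! ### Counting the edges -/

def emb (m : ℕ) : (St × Fin 3 × St) × (Fin m → St) → ((Fin (m+1) → St) × Fin 3 × (Fin (m+1) → St)) :=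
  fun q => (Fin.cons q.1.1 q.2, q.1.2.1, Fin.snoc q.2 q.1.2.2)

lemma emb_inj (m : ℕ) : Function.Injective (emb m) := by
  rintro ⟨⟨s, l, s'⟩, g⟩ ⟨⟨t, r, t'⟩, h⟩ heq
  have h1 : Fin.cons s g = (Fin.cons t h : Fin (m+1) → St) := congrArg Prod.fst heq
  have h2 : l = r := congrArg (fun q => q.2.1) heq
  have h3 : (Fin.snoc g s' : Fin (m+1) → St) = Fin.snoc h t' := congrArg (fun q => q.2.2) heq
  have hs : s = t := by
    have := congrFun h1 0
    simpa using this
  have hg : g = h := by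
    have := congrArg Fin.tail h1
    simpa [Fin.tail_cons] using this
  have hs' : s' = t' := by
    have := congrFun h3 (Fin.last m)
    simpa [Fin.snoc_last] using this
  simp [hs, hg, hs', h2]

lemma EdgesV_eq (m : ℕ) :
    EdgesV m = ↑(Finset.image (emb m) (BEdges ×ˢ (Finset.univ : Finset (Fin m → St)))) := by
  ext ⟨v, l, w⟩
  simp only [Finset.coe_image, Set.mem_image, Finset.mem_coe, Finset.mem_product,
    Finset.mem_univ, and_true]
  constructor
  · rintro ⟨hrot, hstep⟩
    dsimp only at hrot hstep
    refine ⟨((v 0, l, w (Fin.last m)), Fin.tail v), hstep, ?_⟩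
    simp only [emb]
    refine Prod.ext ?_ (Prod.ext rfl ?_)
    · exact Fin.cons_self_tail v
    · show (Fin.snoc (Fin.tail v) (w (Fin.last m)) : Fin (m+1) → St) = w
      funext j
      induction j using Fin.lastCases with
      | last => simp [Fin.snoc_last]
      | cast j =>
        rw [Fin.snoc_castSucc, hrot j]
        rfl
  · rintro ⟨⟨⟨s, l', s'⟩, g⟩, hmem, heq⟩
    obtain ⟨h1, h2, h3⟩ : (Fin.cons s g = v) ∧ l' = l ∧ (Fin.snoc g s' : Fin (m+1) → St) = w := by
      simpa [emb, Prod.ext_iff] using heq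
    subst h1; subst h2; subst h3
    constructor
    · intro j
      show (Fin.snoc g s' : Fin (m+1) → St) j.castSucc = (Fin.cons s g : Fin (m+1) → St) j.succ
      rw [Fin.snoc_castSucc, Fin.cons_succ]
    · show ((Fin.cons s g : Fin (m+1) → St) 0, l', (Fin.snoc g s' : Fin (m+1) → St) (Fin.last m)) ∈ BEdges
      rw [Fin.cons_zero, Fin.snoc_last]
      exact hmem

lemma EdgesV_ncard (m : ℕ) : (EdgesV m).ncard = 6 * 4 ^ m := by
  rw [EdgesV_eq, Set.ncard_coe_finset,
    Finset.card_image_of_injective _ (emb_inj m), Finset.card_product]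
  have h1 : BEdges.card = 6 := by decide
  have h2 : (Finset.univ : Finset (Fin m → St)).card = 4 ^ m := by
    rw [Finset.card_univ, Fintype.card_fun]
    norm_num
  rw [h1, h2]

/-! ### Strong connectivity -/

def gfun : St → St := fun s =>
  if s = (0,0) then (0,0) else if s = (1,0) then (1,1) else if s = (1,1) then (0,1) else (0,0)

def glbl : St → Fin 3 := fun s =>
  if s = (1,0) then 1 else 0

lemma gstep : ∀ s : St, (s, glbl s, gfun s) ∈ BEdges := by decide

lemma g3 : ∀ s : St, gfun (gfun (gfun s)) = (0,0) := by decide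

def Hf : St → ℕ → St := fun t n =>
  if n = 0 then (0,0)
  else if n = 1 then (if t = (0,1) then (1,0) else (0,0))
  else if n = 2 then (if t = (0,1) then (1,1) else if t = (1,1) then (1,0) else (0,0))
  else t

lemma Hstep : ∀ t : St, ∀ n : Fin 3, ∃ l, (Hf t n.val, l, Hf t (n.val+1)) ∈ BEdges := by decide

lemma H0 : ∀ t : St, Hf t 0 = (0,0) := by decide

lemma H3 : ∀ t : St, Hf t 3 = t := by decide

/-- A walk of length exactly 6 between any two states of the base automaton. -/
def Wf (s t : St) (n : ℕ) : St := if n ≤ 3 then gfun^[n] s else Hf t (n - 3)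

lemma W0 (s t : St) : Wf s t 0 = s := by simp [Wf]

lemma W6 (s t : St) : Wf s t 6 = t := by
  simp only [Wf]
  norm_num [H3 t]

lemma g3' : ∀ s : St, gfun^[3] s = (0,0) := by decide

lemma Wstep (s t : St) (n : ℕ) (hn : n < 6) :
    ∃ l, (Wf s t n, l, Wf s t (n+1)) ∈ BEdges := by
  interval_cases n
  · refine ⟨glbl s, ?_⟩
    simp only [Wf]
    norm_num [Function.iterate_one]
    exact gstep s
  · refine ⟨glbl (gfun s), ?_⟩
    simp only [Wf]
    norm_num [show (2:ℕ) = 1 + 1 from rfl, Function.iterate_succ_apply', Function.iterate_one]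
    exact gstep (gfun s)
  · refine ⟨glbl (gfun (gfun s)), ?_⟩
    simp only [Wf]
    norm_num [show (3:ℕ) = 2 + 1 from rfl, show (2:ℕ) = 1 + 1 from rfl,
      Function.iterate_succ_apply', Function.iterate_one]
    exact gstep (gfun (gfun s))
  · -- n = 3 : from gfun^[3] s = (0,0) = Hf t 0 to Hf t 1
    obtain ⟨l, hl⟩ := Hstep t 0
    refine ⟨l, ?_⟩
    have e3 : Wf s t 3 = Hf t 0 := by
      simp only [Wf]
      norm_num [g3' s, H0 t]
    have e4 : Wf s t 4 = Hf t 1 := by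
      simp only [Wf]
      norm_num
    rw [e3, e4]
    simpa using hl
  · obtain ⟨l, hl⟩ := Hstep t 1
    refine ⟨l, ?_⟩
    simp only [Wf]
    norm_num
    exact hl
  · obtain ⟨l, hl⟩ := Hstep t 2
    refine ⟨l, ?_⟩
    simp only [Wf]
    norm_num
    exact hl

lemma chain_rtg {V : Type*} (R : V → V → Prop) (N : ℕ) (f : ℕ → V)
    (h : ∀ i < N, R (f i) (f (i+1))) : Relation.ReflTransGen R (f 0) (f N) := by
  induction N with
  | zero => exact Relation.ReflTransGen.refl
  | succ n ih =>
    exact Relation.ReflTransGen.tail (ih (fun i hi => h i (by omega))) (h n (by omega))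

lemma strongly_connected (m : ℕ) (u w : Fin (m+1) → St) :
    Relation.ReflTransGen (fun a b => ∃ l, (a, l, b) ∈ EdgesV m) u w := by
  have hKpos : 0 < m + 1 := by omega
  set F : ℕ → St := fun n =>
    Wf (u ⟨n % (m+1), Nat.mod_lt _ hKpos⟩) (w ⟨n % (m+1), Nat.mod_lt _ hKpos⟩) (min (n / (m+1)) 6) with hF
  set f : ℕ → (Fin (m+1) → St) := fun i => fun j => F (i + j.val) with hf
  have hf0 : f 0 = u := by
    funext j
    show F (0 + j.val) = u j
    rw [Nat.zero_add]
    have h1 : j.val % (m+1) = j.val := Nat.mod_eq_of_lt j.isLt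
    have h2 : j.val / (m+1) = 0 := Nat.div_eq_of_lt j.isLt
    simp only [hF, h1, h2, Nat.min_def]
    norm_num [W0, Fin.eta]
  have hf6 : f (6 * (m+1)) = w := by
    funext j
    show F (6 * (m+1) + j.val) = w j
    have h1 : (6 * (m+1) + j.val) % (m+1) = j.val := by
      rw [show 6 * (m+1) = (m+1) * 6 from mul_comm 6 (m+1), Nat.mul_add_mod]
      exact Nat.mod_eq_of_lt j.isLt
    have h2 : (6 * (m+1) + j.val) / (m+1) = 6 := by
      rw [show 6 * (m+1) = (m+1) * 6 from mul_comm 6 (m+1), Nat.mul_add_div hKpos, Nat.div_eq_of_lt j.isLt]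
    simp only [hF, h1, h2, Nat.min_self]
    rw [W6, Fin.eta]
  have hsteps : ∀ i < 6 * (m+1), ∃ l, (f i, l, f (i+1)) ∈ EdgesV m := by
    intro i hi
    have hmod : (i + (m+1)) % (m+1) = i % (m+1) := Nat.add_mod_right i (m+1)
    have hdiv : (i + (m+1)) / (m+1) = i / (m+1) + 1 := Nat.add_div_right i hKpos
    have hlt6 : i / (m+1) < 6 := by
      rw [Nat.div_lt_iff_lt_mul hKpos]
      omega
    have hmin1 : min (i / (m+1)) 6 = i / (m+1) := by omega
    have hmin2 : min (i / (m+1) + 1) 6 = i / (m+1) + 1 := by omega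
    obtain ⟨l, hl⟩ := Wstep (u ⟨i % (m+1), Nat.mod_lt _ hKpos⟩) (w ⟨i % (m+1), Nat.mod_lt _ hKpos⟩)
      (i / (m+1)) hlt6
    refine ⟨l, ?_, ?_⟩
    · intro j
      show F ((i+1) + (Fin.castSucc j).val) = F (i + (Fin.succ j).val)
      congr 1
      simp only [Fin.coe_castSucc, Fin.val_succ]
      omega
    · show (F (i + (0 : Fin (m+1)).val), l, F ((i+1) + (Fin.last m).val)) ∈ BEdges
      have e1 : i + ((0 : Fin (m+1)).val) = i := by simp
      have e2 : (i+1) + (Fin.last m).val = i + (m+1) := by rw [Fin.val_last]; omega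
      rw [e1, e2]
      simp only [hF, hmod, hdiv, hmin1, hmin2]
      exact hl
  have := chain_rtg (fun a b => ∃ l, (a, l, b) ∈ EdgesV m) (6 * (m+1)) f hsteps
  rwa [hf0, hf6] at this

/-- For every k ≥ 1 there is a pointed labeled graph over {0,1,2} with 4^k vertices and
6·4^{k−1} labeled edges presenting X(1, Q_k), whose underlying directed graph is
strongly connected. -/
theorem Qk_presentation (k : ℕ) (hk : 1 ≤ k) :
    ∃ (V : Type) (hV : Fintype V) (v0 : V) (E : Set (V × Fin 3 × V)),
      @Fintype.card V hV = 4 ^ k ∧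
      E.ncard = 6 * 4 ^ (k - 1) ∧
      PathSetOf E v0 = X1 (3 ^ (2 * k) - 3 ^ k + 1) ∧
      ∀ u w : V, Relation.ReflTransGen (fun a b => ∃ l, (a, l, b) ∈ E) u w := by
  obtain ⟨m, rfl⟩ : ∃ m, k = m + 1 := ⟨k - 1, by omega⟩
  refine ⟨Fin (m+1) → St, inferInstance, (fun _ => ((0,0) : St)), EdgesV m, ?_, ?_, ?_, ?_⟩
  · rw [Fintype.card_fun]
    norm_num
  · rw [EdgesV_ncard]
    norm_num
  · ext x
    rw [show (x ∈ PathSetOf (EdgesV m) fun _ => ((0,0):St)) = (PathSetOf (EdgesV m) fun _ => ((0,0):St)) x from rfl, show (PathSetOf (EdgesV m) fun _ => ((0,0):St)) x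
        = (x ∈ PathSetOf (EdgesV m) fun _ => ((0,0):St)) from rfl,
      pathset_iff m x, mem_X1_iff m x]
    exact accept_iff m x
  · exact fun u w => strongly_connected m u w

end
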